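/- Let n ≥ 1 and let (P_n,σ) be any signed graph whose underlying graph is the path P_n on n vertices. Then ψ(P_n,σ) = max( {2x : x² ≤ n−1} ∪ {2x+1 : (x+1)² − 1 ≤ n−1} ), where x ranges over the non-negative integers. In particular, the value is independent of the signature σ. -/

import Mathlib

open SimpleGraph

/-- A signature on a graph: a symmetric assignment of signs (`1` or `-1`) to pairs of
vertices (only the values on edges are relevant). -/
def IsSignature {V : Type*} (σ : V → V → ℤ) : Prop :=
  (∀ u v, σ u v = σ v u) ∧ (∀ u v, σ u v = 1 ∨ σ u v = -1)

/-- `σ'` is obtained from `σ` by switching a set of vertices: every vertex gets a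
switching value `±1`, and the sign of an edge is multiplied by the values at its ends. -/
def SwitchEquiv {V : Type*} (σ σ' : V → V → ℤ) : Prop :=
  ∃ s : V → ℤ, (∀ v, s v = 1 ∨ s v = -1) ∧ ∀ u v, σ' u v = s u * s v * σ u v

/-- The colour set `M_k`, as a set of integers: `{±1, …, ±n}` if `k = 2n`, and
`{-n, …, -1, 0, 1, …, n}` if `k = 2n+1` (colour `±0` is represented by `0`). -/
def colourSet (k : ℕ) : Set ℤ :=
  if Even k then {i | i ≠ 0 ∧ i.natAbs ≤ k / 2} else {i | i.natAbs ≤ k / 2}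

/-- A proper `k`-colouring of the signed graph `(G, σ)`: colours come from `M_k` and,
for each edge `uv`, `φ u ≠ σ(uv) · φ v`. -/
def IsProperColouring {V : Type*} (G : SimpleGraph V) (σ : V → V → ℤ) (k : ℕ)
    (φ : V → ℤ) : Prop :=
  (∀ v, φ v ∈ colourSet k) ∧ ∀ u v, G.Adj u v → φ u ≠ σ u v * φ v

/-- The sign of an integer for the purpose of switching: `-1` for negative colours,
`1` otherwise. -/
def isgn (x : ℤ) : ℤ := if x < 0 then -1 else 1

/-- The sign of the edge `uv` after switching every vertex whose colour is negative. -/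
def redSign {V : Type*} (σ : V → V → ℤ) (φ : V → ℤ) (u v : V) : ℤ :=
  isgn (φ u) * isgn (φ v) * σ u v

/-- After switching all negatively-coloured vertices and taking absolute values of
colours, there is an edge of `(G, σ)` whose ends get values `i` and `j` and whose
resulting sign is `s`. -/
def HasEdgeType {V : Type*} (G : SimpleGraph V) (σ : V → V → ℤ) (φ : V → ℤ)
    (i j : ℕ) (s : ℤ) : Prop :=
  ∃ u v, G.Adj u v ∧ (φ u).natAbs = i ∧ (φ v).natAbs = j ∧ redSign σ φ u v = s

/-- A complete `k`-colouring of the signed graph `(G, σ)`. -/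
def IsCompleteColouring {V : Type*} (G : SimpleGraph V) (σ : V → V → ℤ) (k : ℕ)
    (φ : V → ℤ) : Prop :=
  IsProperColouring G σ k φ ∧
  (∀ i j : ℕ, (i : ℤ) ∈ colourSet k → (j : ℤ) ∈ colourSet k → i ≠ j →
    HasEdgeType G σ φ i j 1 ∧ HasEdgeType G σ φ i j (-1)) ∧
  (∀ i : ℕ, 1 ≤ i → (i : ℤ) ∈ colourSet k → HasEdgeType G σ φ i i (-1))

/-- Some signed graph equivalent to `(G, σ)` admits a complete `k`-colouring. -/
def AdmitsComplete {V : Type*} (G : SimpleGraph V) (σ : V → V → ℤ) (k : ℕ) : Prop :=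
  ∃ σ', IsSignature σ' ∧ SwitchEquiv σ σ' ∧ ∃ φ, IsCompleteColouring G σ' k φ

/-- The achromatic number of the signed graph `(G, σ)`: the largest `k` such that some
signed graph equivalent to `(G, σ)` admits a complete `k`-colouring. -/
noncomputable def psi {V : Type*} (G : SimpleGraph V) (σ : V → V → ℤ) : ℕ :=
  sSup {k | AdmitsComplete G σ k}

/-- The chromatic number of the signed graph `(G, σ)`: the smallest `k` such that
`(G, σ)` admits a proper `k`-colouring. -/
noncomputable def chi {V : Type*} (G : SimpleGraph V) (σ : V → V → ℤ) : ℕ :=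
  sInf {k | ∃ φ, IsProperColouring G σ k φ}


/-- first colour of a walk (steps list) with closing vertex `v`. -/
def fc : List (ℕ × ℤ) → ℕ → ℕ
  | [], v => v
  | (a, _) :: _, _ => a

/-- list of edges (colour, sign, next colour) of a walk closed at `v`. -/
def wedges : List (ℕ × ℤ) → ℕ → List (ℕ × ℤ × ℕ)
  | [], _ => []
  | (a, s) :: rest, v => (a, s, fc rest v) :: wedges rest v

@[simp] lemma wedges_nil (v : ℕ) : wedges [] v = [] := rfl
@[simp] lemma wedges_cons (a : ℕ) (s : ℤ) (L : List (ℕ × ℤ)) (v : ℕ) :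
    wedges ((a, s) :: L) v = (a, s, fc L v) :: wedges L v := rfl
@[simp] lemma fc_nil (v : ℕ) : fc [] v = v := rfl
@[simp] lemma fc_cons (a : ℕ) (s : ℤ) (L : List (ℕ × ℤ)) (v : ℕ) :
    fc ((a, s) :: L) v = a := rfl

lemma fc_append (L1 L2 : List (ℕ × ℤ)) (v : ℕ) :
    fc (L1 ++ L2) v = fc L1 (fc L2 v) := by
  cases L1 with
  | nil => simp
  | cons h t => rcases h with ⟨a, s⟩; simp

lemma wedges_append (L1 L2 : List (ℕ × ℤ)) (v : ℕ) :
    wedges (L1 ++ L2) v = wedges L1 (fc L2 v) ++ wedges L2 v := by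
  induction L1 with
  | nil => simp
  | cons h t ih => rcases h with ⟨a, s⟩; simp [ih, fc_append]

@[simp] lemma length_wedges (L : List (ℕ × ℤ)) (v : ℕ) :
    (wedges L v).length = L.length := by
  induction L with
  | nil => rfl
  | cons h t ih => rcases h with ⟨a, s⟩; simp [ih]

/-- middle part of a block at `m`: for `j < k`, steps `(m,+1)` then `(j+1,-1)`. -/
def midA (m : ℕ) : ℕ → List (ℕ × ℤ)
  | 0 => []
  | k + 1 => (m, 1) :: (k + 1, -1) :: midA m k

/-- Eulerian walk covering all types on colours 1..x, closed at x, length x². -/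
def Ew : ℕ → List (ℕ × ℤ)
  | 0 => []
  | 1 => [(1, -1)]
  | x + 2 => (x + 2, -1) :: (midA (x + 2) x ++ (x + 2, 1) :: Ew (x + 1) ++ [(x + 1, -1)])

/-- Eulerian walk covering all types on colours 0..x, closed at x, length x²+2x. -/
def Ow : ℕ → List (ℕ × ℤ)
  | 0 => []
  | 1 => [(1, -1), (1, 1), (0, -1)]
  | x + 2 => (x + 2, -1) :: (x + 2, 1) :: (0, -1) ::
      (midA (x + 2) x ++ (x + 2, 1) :: Ow (x + 1) ++ [(x + 1, -1)])

@[simp] lemma length_midA (m k : ℕ) : (midA m k).length = 2 * k := by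
  induction k with
  | zero => rfl
  | succ k ih => simp [midA, ih]; ring

lemma length_Ew : ∀ x, (Ew x).length = x ^ 2
  | 0 => rfl
  | 1 => rfl
  | x + 2 => by simp [Ew, length_Ew (x + 1)]; ring

lemma length_Ow : ∀ x, (Ow x).length = x ^ 2 + 2 * x
  | 0 => rfl
  | 1 => rfl
  | x + 2 => by simp [Ow, length_Ow (x + 1)]; ring

lemma fc_Ew (x : ℕ) (hx : 1 ≤ x) (v : ℕ) : fc (Ew x) v = x := by
  match x, hx with
  | 1, _ => rfl
  | x + 2, _ => rfl

lemma fc_Ow (x : ℕ) (hx : 1 ≤ x) (v : ℕ) : fc (Ow x) v = x := by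
  match x, hx with
  | 1, _ => rfl
  | x + 2, _ => rfl

lemma fc_midA_self (m k : ℕ) : fc (midA m k) m = m := by
  cases k <;> rfl

lemma fc_midA_cons (m k a : ℕ) (s : ℤ) (L : List (ℕ × ℤ)) (v : ℕ) :
    fc (midA m k ++ (m, s) :: L) v = m := by
  cases k <;> simp [midA]

lemma wedges_midA_succ (m k : ℕ) :
    wedges (midA m (k + 1)) m
      = (m, (1:ℤ), k + 1) :: (k + 1, (-1:ℤ), m) :: wedges (midA m k) m := by
  simp [midA, fc_midA_self]

lemma mem_wedges_midA (m k : ℕ) {e : ℕ × ℤ × ℕ} (he : e ∈ wedges (midA m k) m) :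
    ∃ j, j + 1 ≤ k ∧ (e = (m, 1, j + 1) ∨ e = (j + 1, -1, m)) := by
  induction k with
  | zero => simp [midA] at he
  | succ k ih =>
    rw [wedges_midA_succ] at he
    simp only [List.mem_cons] at he
    rcases he with h | h | h
    · exact ⟨k, le_refl _, Or.inl h⟩
    · exact ⟨k, le_refl _, Or.inr h⟩
    · obtain ⟨j, hj, hd⟩ := ih h; exact ⟨j, by omega, hd⟩

lemma midA_covers (m k j : ℕ) (hj : j + 1 ≤ k) :
    (m, (1:ℤ), j + 1) ∈ wedges (midA m k) m ∧ ((j:ℕ) + 1, (-1:ℤ), m) ∈ wedges (midA m k) m := by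
  induction k with
  | zero => omega
  | succ k ih =>
    rw [wedges_midA_succ]
    rcases Nat.lt_or_ge (j + 1) (k + 1) with h | h
    · obtain ⟨h1, h2⟩ := ih (by omega)
      exact ⟨by simp [h1], by simp [h2]⟩
    · have : j = k := by omega
      subst this
      exact ⟨by simp, by simp⟩

lemma wedges_Ew_succ (x : ℕ) :
    wedges (Ew (x + 2)) (x + 2)
      = (x + 2, (-1:ℤ), x + 2) :: (wedges (midA (x + 2) x) (x + 2)
          ++ (x + 2, (1:ℤ), x + 1) :: (wedges (Ew (x + 1)) (x + 1) ++ [(x + 1, (-1:ℤ), x + 2)])) := by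
  show wedges ((x + 2, (-1:ℤ)) :: (midA (x + 2) x ++ (x + 2, 1) :: Ew (x + 1) ++ [(x + 1, -1)])) (x+2) = _
  have h1 : midA (x + 2) x ++ (x + 2, (1:ℤ)) :: Ew (x + 1) ++ [(x + 1, (-1:ℤ))]
      = midA (x + 2) x ++ ((x + 2, (1:ℤ)) :: (Ew (x + 1) ++ [(x + 1, (-1:ℤ))])) := by simp
  rw [h1]
  simp only [wedges_cons, wedges_append, fc_append, fc_cons, fc_midA_cons, fc_midA_self,
    fc_Ew _ (show 1 ≤ x + 1 by omega), wedges_nil, fc_nil]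

lemma wedges_Ow_succ (x : ℕ) :
    wedges (Ow (x + 2)) (x + 2)
      = (x + 2, (-1:ℤ), x + 2) :: (x + 2, (1:ℤ), 0) :: (0, (-1:ℤ), x + 2)
          :: (wedges (midA (x + 2) x) (x + 2)
          ++ (x + 2, (1:ℤ), x + 1) :: (wedges (Ow (x + 1)) (x + 1) ++ [(x + 1, (-1:ℤ), x + 2)])) := by
  show wedges ((x + 2, (-1:ℤ)) :: (x + 2, (1:ℤ)) :: (0, (-1:ℤ)) ::
      (midA (x + 2) x ++ (x + 2, 1) :: Ow (x + 1) ++ [(x + 1, -1)])) (x+2) = _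
  have h1 : midA (x + 2) x ++ (x + 2, (1:ℤ)) :: Ow (x + 1) ++ [(x + 1, (-1:ℤ))]
      = midA (x + 2) x ++ ((x + 2, (1:ℤ)) :: (Ow (x + 1) ++ [(x + 1, (-1:ℤ))])) := by simp
  rw [h1]
  simp only [wedges_cons, wedges_append, fc_append, fc_cons, fc_midA_cons, fc_midA_self,
    fc_Ow _ (show 1 ≤ x + 1 by omega), wedges_nil, fc_nil]

lemma mem_wedges_of_mem {L : List (ℕ × ℤ)} {a : ℕ} {s : ℤ} (h : (a, s) ∈ L) (v : ℕ) :
    ∃ b, (a, s, b) ∈ wedges L v := by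
  induction L with
  | nil => simp at h
  | cons p t ih =>
    rcases p with ⟨c, r⟩
    rcases List.mem_cons.mp h with h | h
    · exact ⟨fc t v, by simp [← h]⟩
    · obtain ⟨b, hb⟩ := ih h
      exact ⟨b, by simp [hb]⟩

lemma wedges_Ew_one : wedges (Ew 1) 1 = [(1, -1, 1)] := rfl

lemma wedges_Ow_one : wedges (Ow 1) 1 = [(1, -1, 1), (1, 1, 0), (0, -1, 1)] := rfl

/-- all edges of `Ew x` are proper, have colours in `[1,x]`, and signs `±1`. -/
lemma Ew_edges : ∀ x, 1 ≤ x → ∀ e ∈ wedges (Ew x) x,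
    ((e.1 : ℤ) ≠ e.2.1 * e.2.2) ∧ (1 ≤ e.1 ∧ e.1 ≤ x) ∧ (1 ≤ e.2.2 ∧ e.2.2 ≤ x) ∧
      (e.2.1 = 1 ∨ e.2.1 = -1)
  | 0, h => by omega
  | 1, _ => by
    intro e he
    rw [wedges_Ew_one] at he
    simp only [List.mem_singleton] at he
    subst he
    norm_num
  | x + 2, _ => by
    intro e he
    rw [wedges_Ew_succ] at he
    simp only [List.mem_cons, List.mem_append, List.mem_singleton, List.not_mem_nil,
      or_false] at he
    rcases he with h | h | h | h | h
    · subst h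
      refine ⟨?_, ?_, ?_, ?_⟩ <;> simp <;> push_cast <;> omega
    · obtain ⟨j, hj, hd⟩ := mem_wedges_midA _ _ h
      rcases hd with h | h <;> subst h <;>
        (refine ⟨?_, ?_, ?_, ?_⟩ <;> simp <;> push_cast <;> omega)
    · subst h
      refine ⟨?_, ?_, ?_, ?_⟩ <;> simp <;> push_cast <;> omega
    · have := Ew_edges (x + 1) (by omega) e h
      exact ⟨this.1, by omega, by omega, this.2.2.2⟩
    · subst h
      refine ⟨?_, ?_, ?_, ?_⟩ <;> simp <;> push_cast <;> omega

lemma Ow_edges : ∀ x, 1 ≤ x → ∀ e ∈ wedges (Ow x) x,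
    ((e.1 : ℤ) ≠ e.2.1 * e.2.2) ∧ (e.1 ≤ x) ∧ (e.2.2 ≤ x) ∧ (e.2.1 = 1 ∨ e.2.1 = -1)
  | 0, h => by omega
  | 1, _ => by
    intro e he
    rw [wedges_Ow_one] at he
    simp only [List.mem_cons, List.mem_singleton, List.not_mem_nil, or_false] at he
    rcases he with h | h | h <;> subst h <;> norm_num
  | x + 2, _ => by
    intro e he
    rw [wedges_Ow_succ] at he
    simp only [List.mem_cons, List.mem_append, List.mem_singleton, List.not_mem_nil,
      or_false] at he
    rcases he with h | h | h | h | h | h | h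
    · subst h
      refine ⟨?_, ?_, ?_, ?_⟩ <;> simp <;> push_cast <;> omega
    · subst h
      refine ⟨?_, ?_, ?_, ?_⟩ <;> simp <;> push_cast <;> omega
    · subst h
      refine ⟨?_, ?_, ?_, ?_⟩ <;> simp <;> push_cast <;> omega
    · obtain ⟨j, hj, hd⟩ := mem_wedges_midA _ _ h
      rcases hd with h | h <;> subst h <;>
        (refine ⟨?_, ?_, ?_, ?_⟩ <;> simp <;> push_cast <;> omega)
    · subst h
      refine ⟨?_, ?_, ?_, ?_⟩ <;> simp <;> push_cast <;> omega
    · have := Ow_edges (x + 1) (by omega) e h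
      exact ⟨this.1, by omega, by omega, this.2.2.2⟩
    · subst h
      refine ⟨?_, ?_, ?_, ?_⟩ <;> simp <;> push_cast <;> omega

lemma Ew_cov : ∀ x, 1 ≤ x → ∀ i j : ℕ, 1 ≤ i → i ≤ j → j ≤ x →
    ((i < j → ((i, (1:ℤ), j) ∈ wedges (Ew x) x ∨ (j, (1:ℤ), i) ∈ wedges (Ew x) x)) ∧
      ((i, (-1:ℤ), j) ∈ wedges (Ew x) x ∨ (j, (-1:ℤ), i) ∈ wedges (Ew x) x))
  | 0, h => by omega
  | 1, _ => by
    intro i j hi hij hj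
    have : i = 1 ∧ j = 1 := by omega
    obtain ⟨rfl, rfl⟩ := this
    rw [wedges_Ew_one]
    exact ⟨by omega, by simp⟩
  | x + 2, _ => by
    intro i j hi hij hj
    rw [wedges_Ew_succ]
    simp only [List.mem_cons, List.mem_append, List.mem_singleton]
    rcases Nat.lt_or_ge j (x + 2) with hjx | hjx
    · have IH := Ew_cov (x + 1) (by omega) i j hi hij (by omega)
      constructor
      · intro hlt
        rcases IH.1 hlt with h | h
        · exact Or.inl (by tauto)
        · exact Or.inr (by tauto)
      · rcases IH.2 with h | h
        · exact Or.inl (by tauto)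
        · exact Or.inr (by tauto)
    · have hj2 : j = x + 2 := by omega
      subst hj2
      rcases Nat.lt_or_ge i (x + 1) with hix | hix
      · -- 1 ≤ i ≤ x : use mid
        obtain ⟨hpos, hneg⟩ := midA_covers (x + 2) x (i - 1) (by omega)
        have hi1 : i - 1 + 1 = i := by omega
        rw [hi1] at hpos hneg
        exact ⟨fun _ => Or.inr (by tauto), Or.inl (by tauto)⟩
      · rcases Nat.lt_or_ge i (x + 2) with hix2 | hix2
        · have : i = x + 1 := by omega
          subst this
          exact ⟨fun _ => Or.inr (by tauto), Or.inl (by tauto)⟩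
        · have : i = x + 2 := by omega
          subst this
          exact ⟨by omega, Or.inl (by tauto)⟩

lemma Ow_cov : ∀ x, 1 ≤ x → ∀ i j : ℕ, i ≤ j → j ≤ x →
    ((i < j → ((i, (1:ℤ), j) ∈ wedges (Ow x) x ∨ (j, (1:ℤ), i) ∈ wedges (Ow x) x)) ∧
      (1 ≤ i ∨ i < j → ((i, (-1:ℤ), j) ∈ wedges (Ow x) x ∨ (j, (-1:ℤ), i) ∈ wedges (Ow x) x)))
  | 0, h => by omega
  | 1, _ => by
    intro i j hij hj
    rw [wedges_Ow_one]
    rcases Nat.lt_or_ge i 1 with hi | hi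
    · have : i = 0 := by omega
      subst this
      rcases Nat.lt_or_ge j 1 with hj0 | hj0
      · have : j = 0 := by omega
        subst this
        exact ⟨by omega, by omega⟩
      · have : j = 1 := by omega
        subst this
        exact ⟨fun _ => Or.inr (by simp), fun _ => Or.inl (by simp)⟩
    · have : i = 1 ∧ j = 1 := by omega
      obtain ⟨rfl, rfl⟩ := this
      exact ⟨by omega, fun _ => Or.inl (by simp)⟩
  | x + 2, _ => by
    intro i j hij hj
    rw [wedges_Ow_succ]
    simp only [List.mem_cons, List.mem_append, List.mem_singleton]
    rcases Nat.lt_or_ge j (x + 2) with hjx | hjx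
    · have IH := Ow_cov (x + 1) (by omega) i j hij (by omega)
      constructor
      · intro hlt
        rcases IH.1 hlt with h | h
        · exact Or.inl (by tauto)
        · exact Or.inr (by tauto)
      · intro hc
        rcases IH.2 hc with h | h
        · exact Or.inl (by tauto)
        · exact Or.inr (by tauto)
    · have hj2 : j = x + 2 := by omega
      subst hj2
      rcases Nat.lt_or_ge i 1 with hi0 | hi0
      · have : i = 0 := by omega
        subst this
        exact ⟨fun _ => Or.inr (by tauto), fun _ => Or.inl (by tauto)⟩
      rcases Nat.lt_or_ge i (x + 1) with hix | hix
      · obtain ⟨hpos, hneg⟩ := midA_covers (x + 2) x (i - 1) (by omega)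
        have hi1 : i - 1 + 1 = i := by omega
        rw [hi1] at hpos hneg
        exact ⟨fun _ => Or.inr (by tauto), fun _ => Or.inl (by tauto)⟩
      · rcases Nat.lt_or_ge i (x + 2) with hix2 | hix2
        · have : i = x + 1 := by omega
          subst this
          exact ⟨fun _ => Or.inr (by tauto), fun _ => Or.inl (by tauto)⟩
        · have : i = x + 2 := by omega
          subst this
          exact ⟨by omega, fun _ => Or.inl (by tauto)⟩

lemma sgn_mul {a b : ℤ} (ha : a = 1 ∨ a = -1) (hb : b = 1 ∨ b = -1) :
    a * b = 1 ∨ a * b = -1 := by rcases ha with h | h <;> rcases hb with h2 | h2 <;> simp [h, h2]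

lemma neq_swap {a b s : ℤ} (hs : s = 1 ∨ s = -1) (h : a ≠ s * b) : b ≠ s * a := by
  rcases hs with h1 | h1 <;> subst h1 <;> omega

lemma mem_colourSet_even (x i : ℕ) : ((i : ℤ) ∈ colourSet (2 * x)) ↔ (1 ≤ i ∧ i ≤ x) := by
  have : Even (2 * x) := even_two_mul x
  simp [colourSet, this, Int.natAbs_natCast]
  omega

lemma mem_colourSet_odd (x i : ℕ) : ((i : ℤ) ∈ colourSet (2 * x + 1)) ↔ i ≤ x := by
  have : ¬ Even (2 * x + 1) := by simp [Nat.even_add_one, parity_simps]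
  simp [colourSet, this, Int.natAbs_natCast]
  omega

lemma pad_edges (p v : ℕ) {e : ℕ × ℤ × ℕ} (he : e ∈ wedges (List.replicate p (1, (-1:ℤ))) v) :
    e = (1, -1, 1) ∨ e = (1, -1, v) := by
  induction p with
  | zero => simp at he
  | succ p ih =>
    rw [List.replicate_succ, wedges_cons] at he
    rcases List.mem_cons.mp he with h | h
    · subst h
      cases p with
      | zero => exact Or.inr rfl
      | succ p => exact Or.inl (by rw [List.replicate_succ]; rfl)
    · exact ih h

lemma fc_eq_getD (L : List (ℕ × ℤ)) (v : ℕ) :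
    fc L v = (L.map Prod.fst ++ [v]).getD 0 0 := by
  cases L with
  | nil => rfl
  | cons h t => rcases h with ⟨a, s⟩; rfl

lemma wedges_getElem (L : List (ℕ × ℤ)) (v : ℕ) :
    ∀ (m : ℕ) (h : m < L.length),
      (wedges L v)[m]'(by simpa using h)
        = ((L[m]'h).1, (L[m]'h).2, (L.map Prod.fst ++ [v]).getD (m + 1) 0) := by
  induction L with
  | nil => intro m h; simp at h
  | cons hd t ih =>
    rcases hd with ⟨a, s⟩
    intro m h
    cases m with
    | zero => simpa using fc_eq_getD t v
    | succ m =>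
      have h' : m < t.length := by simpa using h
      simpa using ih m h'

lemma HET_symm {V : Type*} {G : SimpleGraph V} {σ' : V → V → ℤ} {φ : V → ℤ} {i j : ℕ} {s : ℤ}
    (hsym : ∀ u v, σ' u v = σ' v u) (h : HasEdgeType G σ' φ i j s) :
    HasEdgeType G σ' φ j i s := by
  obtain ⟨u, v, hadj, hu, hv, hs⟩ := h
  refine ⟨v, u, hadj.symm, hv, hu, ?_⟩
  rw [← hs]
  unfold redSign
  rw [hsym v u]
  ring

lemma isgn_natCast (c : ℕ) : isgn ((c : ℕ) : ℤ) = 1 := by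
  simp [isgn]

open Fin.NatCast in
lemma build (n x k : ℕ) (hn : 2 ≤ n) (σ : Fin n → Fin n → ℤ) (hσ : IsSignature σ)
    (W0 : List (ℕ × ℤ)) (hlen : W0.length ≤ n - 1) (hfc : ∀ v, fc W0 v = x)
    (hedges : ∀ e ∈ wedges W0 x, ((e.1 : ℤ) ≠ e.2.1 * e.2.2) ∧ ((e.1 : ℤ) ∈ colourSet k) ∧
      ((e.2.2 : ℤ) ∈ colourSet k) ∧ (e.2.1 = 1 ∨ e.2.1 = -1))
    (hxk : ((x : ℕ) : ℤ) ∈ colourSet k) (h1k : ((1 : ℕ) : ℤ) ∈ colourSet k)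
    (hcov2 : ∀ i j : ℕ, (i : ℤ) ∈ colourSet k → (j : ℤ) ∈ colourSet k → i < j →
      ∀ s : ℤ, (s = 1 ∨ s = -1) →
        ((i, s, j) ∈ wedges W0 x ∨ (j, s, i) ∈ wedges W0 x))
    (hcov3 : ∀ i : ℕ, 1 ≤ i → (i : ℤ) ∈ colourSet k →
      ((i, (-1:ℤ), i) ∈ wedges W0 x)) :
    AdmitsComplete (SimpleGraph.pathGraph n) σ k := by
  haveI : NeZero n := ⟨by omega⟩
  classical
  set p := (n - 1) - W0.length with hp
  set W := List.replicate p (1, (-1:ℤ)) ++ W0 with hW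
  have hWlen : W.length = n - 1 := by
    simp only [hW, List.length_append, List.length_replicate]
    omega
  have hwed : wedges W x = wedges (List.replicate p (1, (-1:ℤ))) x ++ wedges W0 x := by
    rw [hW, wedges_append, hfc]
  -- edge properties for W
  have hedgesW : ∀ e ∈ wedges W x, ((e.1 : ℤ) ≠ e.2.1 * e.2.2) ∧ ((e.1 : ℤ) ∈ colourSet k) ∧
      ((e.2.2 : ℤ) ∈ colourSet k) ∧ (e.2.1 = 1 ∨ e.2.1 = -1) := by
    intro e he
    rw [hwed] at he
    rcases List.mem_append.mp he with h | h
    · rcases pad_edges p x h with h | h <;> subst h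
      · exact ⟨by norm_num, h1k, h1k, by norm_num⟩
      · refine ⟨?_, h1k, hxk, by norm_num⟩
        simp only
        push_cast
        omega
    · exact hedges e h
  have hmemW : ∀ e ∈ wedges W0 x, e ∈ wedges W x := by
    intro e he; rw [hwed]; exact List.mem_append_right _ he
  -- colours
  set C := W.map Prod.fst ++ [x] with hC
  set c : ℕ → ℕ := fun m => C.getD m 0 with hc
  set t : ℕ → ℤ := fun m => (W.getD m ((0:ℕ), (1:ℤ))).2 with htdef
  have hClen : C.length = n := by
    simp only [hC, List.length_append, List.length_map, List.length_singleton]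
    omega
  have hcm : ∀ m (h : m < W.length), c m = (W[m]'h).1 := by
    intro m h
    simp only [hc, hC]
    rw [List.getD_eq_getElem?_getD, List.getElem?_append_left (by simpa using h)]
    simp [List.getElem?_eq_getElem, h]
  have hclast : c W.length = x := by
    simp only [hc, hC]
    rw [List.getD_eq_getElem?_getD]
    rw [List.getElem?_append_right (by simp)]
    simp
  have htm : ∀ m (h : m < W.length), t m = (W[m]'h).2 := by
    intro m h
    simp only [htdef]
    rw [List.getD_eq_getElem?_getD, List.getElem?_eq_getElem h]
    rfl
  -- edge at index m
  have hedge_idx : ∀ m (h : m < W.length), (c m, t m, c (m + 1)) ∈ wedges W x := by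
    intro m h
    have h2 : m < (wedges W x).length := by simpa using h
    have := wedges_getElem W x m h
    have hmem : (wedges W x)[m]'h2 ∈ wedges W x := List.getElem_mem h2
    rw [this] at hmem
    have hcm' : c (m + 1) = (W.map Prod.fst ++ [x]).getD (m + 1) 0 := rfl
    rw [hcm m h, htm m h, hcm']
    exact hmem
  have hidx_of_mem : ∀ e ∈ wedges W x, ∃ m, m < W.length ∧ e = (c m, t m, c (m + 1)) := by
    intro e he
    obtain ⟨m, hm, hge⟩ := List.mem_iff_getElem.mp he
    have hm' : m < W.length := by simpa using hm
    refine ⟨m, hm', ?_⟩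
    rw [← hge, wedges_getElem W x m hm', hcm m hm', htm m hm']
  have ht : ∀ m, t m = 1 ∨ t m = -1 := by
    intro m
    rcases Nat.lt_or_ge m W.length with h | h
    · rw [htm m h]
      exact (hedgesW _ (hedge_idx m h)).2.2.2 |>.imp (by rw [htm m h]; exact id) (by rw [htm m h]; exact id)
    · simp only [htdef]
      rw [List.getD_eq_getElem?_getD, List.getElem?_eq_none (by omega)]
      left; rfl
  -- the switching function
  set f : ℕ → ℤ := fun m => Nat.rec (1 : ℤ)
    (fun m fm => fm * σ (m : Fin n) (((m + 1 : ℕ)) : Fin n) * t m) m with hfdef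
  have hf0 : f 0 = 1 := rfl
  have hfs : ∀ m, f (m + 1) = f m * σ (m : Fin n) (((m + 1 : ℕ)) : Fin n) * t m := fun m => rfl
  have hf : ∀ m, f m = 1 ∨ f m = -1 := by
    intro m
    induction m with
    | zero => left; rfl
    | succ m ih =>
      rw [hfs]
      exact sgn_mul (sgn_mul ih (hσ.2 _ _)) (ht m)
  set σ' : Fin n → Fin n → ℤ := fun u v => f u.val * f v.val * σ u v with hσ'def
  have hsymm' : ∀ u v, σ' u v = σ' v u := by
    intro u v
    simp only [hσ'def]
    rw [hσ.1 u v]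
    ring
  have hsig' : IsSignature σ' := by
    refine ⟨hsymm', fun u v => ?_⟩
    exact sgn_mul (sgn_mul (hf _) (hf _)) (hσ.2 u v)
  have hswitch : SwitchEquiv σ σ' := ⟨fun v => f v.val, fun v => hf _, fun u v => rfl⟩
  -- key: σ' on edge (m, m+1) is t m
  have hkey : ∀ (u v : Fin n), u.val + 1 = v.val → σ' u v = t u.val := by
    intro u v huv
    have hv : v.val < n := v.isLt
    have hu' : ((u.val : ℕ) : Fin n) = u := Fin.cast_val_eq_self u
    have hv' : (((u.val + 1 : ℕ)) : Fin n) = v := by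
      apply Fin.ext
      rw [Fin.val_cast_of_lt (by omega)]
      omega
    have : f v.val = f u.val * σ u v * t u.val := by
      rw [← huv, hfs, hu', hv']
    simp only [hσ'def]
    rw [this]
    rcases hf u.val with h | h <;> rcases hσ.2 u v with h2 | h2 <;> rw [h, h2] <;> ring
  -- the colouring
  set φ : Fin n → ℤ := fun v => ((c v.val : ℕ) : ℤ) with hφdef
  have hφ_mem : ∀ v : Fin n, φ v ∈ colourSet k := by
    intro v
    rcases Nat.lt_or_ge v.val (W.length) with h | h
    · exact (hedgesW _ (hedge_idx v.val h)).2.1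
    · have : v.val = W.length := by omega
      simp only [hφdef, this, hclast]
      exact hxk
  have hproper : IsProperColouring (SimpleGraph.pathGraph n) σ' k φ := by
    refine ⟨hφ_mem, ?_⟩
    intro u v hadj
    rcases (SimpleGraph.pathGraph_adj.mp hadj) with huv | huv
    · have hm : u.val < W.length := by omega
      have hprop := (hedgesW _ (hedge_idx u.val hm)).1
      have := hkey u v huv
      simp only [hφdef]
      rw [this, ← huv]
      exact hprop
    · have hm : v.val < W.length := by omega
      have hprop := (hedgesW _ (hedge_idx v.val hm)).1
      have hk2 := hkey v u huv
      have hσ'uv : σ' u v = t v.val := by rw [hsymm' u v, hk2]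
      simp only [hφdef]
      rw [hσ'uv]
      apply neq_swap (ht v.val)
      rw [← huv]
      exact hprop
  -- edge types
  have hHET : ∀ (i j : ℕ) (s : ℤ), (i, s, j) ∈ wedges W x →
      HasEdgeType (SimpleGraph.pathGraph n) σ' φ i j s := by
    intro i j s hmem
    obtain ⟨m, hm, heq⟩ := hidx_of_mem _ hmem
    have h1 : c m = i := by rw [(Prod.mk.injEq _ _ _ _).mp heq |>.1]
    have heq2 := (Prod.mk.injEq _ _ _ _).mp heq |>.2
    have h2 : t m = s := by rw [(Prod.mk.injEq _ _ _ _).mp heq2 |>.1]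
    have h3 : c (m + 1) = j := by rw [(Prod.mk.injEq _ _ _ _).mp heq2 |>.2]
    have hmn : m + 1 < n := by omega
    refine ⟨⟨m, by omega⟩, ⟨m + 1, hmn⟩, ?_, ?_, ?_, ?_⟩
    · exact SimpleGraph.pathGraph_adj.mpr (Or.inl rfl)
    · simp only [hφdef]; rw [h1]; exact Int.natAbs_natCast i
    · simp only [hφdef]; rw [h3]; exact Int.natAbs_natCast j
    · unfold redSign
      simp only [hφdef]
      rw [isgn_natCast, isgn_natCast]
      have := hkey ⟨m, by omega⟩ ⟨m + 1, hmn⟩ rfl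
      rw [this]
      simp only [one_mul]
      exact h2 ▸ rfl
  have hHETcov : ∀ (i j : ℕ) (s : ℤ), ((i, s, j) ∈ wedges W0 x ∨ (j, s, i) ∈ wedges W0 x) →
      HasEdgeType (SimpleGraph.pathGraph n) σ' φ i j s := by
    intro i j s hor
    rcases hor with h | h
    · exact hHET i j s (hmemW _ h)
    · exact HET_symm hsymm' (hHET j i s (hmemW _ h))
  refine ⟨σ', hsig', hswitch, φ, hproper, ?_, ?_⟩
  · intro i j hi hj hij
    rcases Nat.lt_or_ge i j with h | h
    · exact ⟨hHETcov i j 1 (hcov2 i j hi hj h 1 (Or.inl rfl)),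
        hHETcov i j (-1) (hcov2 i j hi hj h (-1) (Or.inr rfl))⟩
    · have h' : j < i := by omega
      exact ⟨HET_symm hsymm' (hHETcov j i 1 (hcov2 j i hj hi h' 1 (Or.inl rfl))),
        HET_symm hsymm' (hHETcov j i (-1) (hcov2 j i hj hi h' (-1) (Or.inr rfl)))⟩
  · intro i hi hik
    exact hHETcov i i (-1) (Or.inl (hcov3 i hi hik))

lemma construct_even (n x : ℕ) (hn : 2 ≤ n) (hx : 1 ≤ x) (hxn : x ^ 2 ≤ n - 1)
    (σ : Fin n → Fin n → ℤ) (hσ : IsSignature σ) :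
    AdmitsComplete (SimpleGraph.pathGraph n) σ (2 * x) := by
  apply build n x (2 * x) hn σ hσ (Ew x)
  · rw [length_Ew]; exact hxn
  · exact fun v => fc_Ew x hx v
  · intro e he
    obtain ⟨h1, h2, h3, h4⟩ := Ew_edges x hx e he
    exact ⟨h1, (mem_colourSet_even x _).mpr h2, (mem_colourSet_even x _).mpr h3, h4⟩
  · exact (mem_colourSet_even x x).mpr ⟨hx, le_refl x⟩
  · exact (mem_colourSet_even x 1).mpr ⟨le_refl 1, hx⟩
  · intro i j hi hj hij s hs
    have hi' := (mem_colourSet_even x i).mp hi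
    have hj' := (mem_colourSet_even x j).mp hj
    rcases hs with rfl | rfl
    · exact (Ew_cov x hx i j hi'.1 (by omega) hj'.2).1 hij
    · exact (Ew_cov x hx i j hi'.1 (by omega) hj'.2).2
  · intro i hi hik
    have hi' := (mem_colourSet_even x i).mp hik
    rcases (Ew_cov x hx i i hi'.1 (le_refl i) hi'.2).2 with h | h <;> exact h

lemma construct_odd (n x : ℕ) (hn : 2 ≤ n) (hx : 1 ≤ x) (hxn : x ^ 2 + 2 * x ≤ n - 1)
    (σ : Fin n → Fin n → ℤ) (hσ : IsSignature σ) :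
    AdmitsComplete (SimpleGraph.pathGraph n) σ (2 * x + 1) := by
  apply build n x (2 * x + 1) hn σ hσ (Ow x)
  · rw [length_Ow]; exact hxn
  · exact fun v => fc_Ow x hx v
  · intro e he
    obtain ⟨h1, h2, h3, h4⟩ := Ow_edges x hx e he
    exact ⟨h1, (mem_colourSet_odd x _).mpr h2, (mem_colourSet_odd x _).mpr h3, h4⟩
  · exact (mem_colourSet_odd x x).mpr (le_refl x)
  · exact (mem_colourSet_odd x 1).mpr hx
  · intro i j hi hj hij s hs
    have hi' := (mem_colourSet_odd x i).mp hi
    have hj' := (mem_colourSet_odd x j).mp hj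
    rcases hs with rfl | rfl
    · exact (Ow_cov x hx i j (by omega) hj').1 hij
    · exact (Ow_cov x hx i j (by omega) hj').2 (Or.inr hij)
  · intro i hi hik
    have hi' := (mem_colourSet_odd x i).mp hik
    rcases (Ow_cov x hx i i (le_refl i) hi').2 (Or.inl hi) with h | h <;> exact h

lemma redSign_symm {V : Type*} {σ' : V → V → ℤ} (φ : V → ℤ) (hsym : ∀ u v, σ' u v = σ' v u)
    (u v : V) : redSign σ' φ u v = redSign σ' φ v u := by
  unfold redSign
  rw [hsym u v]
  ring

lemma count_main {n k : ℕ} {σ' : Fin n → Fin n → ℤ} {φ : Fin n → ℤ}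
    (hsym : ∀ u v, σ' u v = σ' v u)
    (hcomp : IsCompleteColouring (SimpleGraph.pathGraph n) σ' k φ)
    (D : Finset (ℕ × ℕ)) (g : ℕ × ℕ → ℕ × ℕ × ℤ)
    (hg : Set.InjOn g D)
    (hreq : ∀ p ∈ D, (g p).1 ≤ (g p).2.1 ∧ ((g p).1 : ℤ) ∈ colourSet k ∧
      ((g p).2.1 : ℤ) ∈ colourSet k ∧
      ((g p).1 = (g p).2.1 → 1 ≤ (g p).1 ∧ (g p).2.2 = -1) ∧
      ((g p).1 ≠ (g p).2.1 → (g p).2.2 = 1 ∨ (g p).2.2 = -1)) :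
    D.card ≤ n - 1 := by
  classical
  -- each required type has a witness edge
  have hHET : ∀ p ∈ D, HasEdgeType (SimpleGraph.pathGraph n) σ' φ (g p).1 (g p).2.1 (g p).2.2 := by
    intro p hp
    obtain ⟨hle, hm1, hm2, hloop, hpair⟩ := hreq p hp
    rcases eq_or_ne (g p).1 (g p).2.1 with he | he
    · obtain ⟨h1, h2⟩ := hloop he
      have := hcomp.2.2 (g p).1 h1 hm1
      rw [h2, he]
      rw [he] at this
      exact this
    · rcases hpair he with h | h <;> rw [h]
      · exact (hcomp.2.1 _ _ hm1 hm2 he).1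
      · exact (hcomp.2.1 _ _ hm1 hm2 he).2
  set F : ℕ × ℕ → ℕ := fun p =>
    if h : HasEdgeType (SimpleGraph.pathGraph n) σ' φ (g p).1 (g p).2.1 (g p).2.2 then
      min h.choose.val h.choose_spec.choose.val
    else 0 with hF
  have Fspec : ∀ p ∈ D, ∃ u v : Fin n, (SimpleGraph.pathGraph n).Adj u v ∧
      (φ u).natAbs = (g p).1 ∧ (φ v).natAbs = (g p).2.1 ∧
      redSign σ' φ u v = (g p).2.2 ∧ F p = min u.val v.val := by
    intro p hp
    have h := hHET p hp
    refine ⟨h.choose, h.choose_spec.choose, h.choose_spec.choose_spec.1,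
      h.choose_spec.choose_spec.2.1, h.choose_spec.choose_spec.2.2.1,
      h.choose_spec.choose_spec.2.2.2, ?_⟩
    simp only [hF, dif_pos h]
  -- oriented witnesses
  have orient : ∀ p ∈ D, ∃ a b : Fin n, a.val + 1 = b.val ∧
      (((φ a).natAbs = (g p).1 ∧ (φ b).natAbs = (g p).2.1) ∨
        ((φ a).natAbs = (g p).2.1 ∧ (φ b).natAbs = (g p).1)) ∧
      redSign σ' φ a b = (g p).2.2 ∧ F p = a.val := by
    intro p hp
    obtain ⟨u, v, hadj, hu, hv, hs, hFp⟩ := Fspec p hp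
    rcases SimpleGraph.pathGraph_adj.mp hadj with h | h
    · exact ⟨u, v, h, Or.inl ⟨hu, hv⟩, hs, by omega⟩
    · refine ⟨v, u, h, Or.inr ⟨hv, hu⟩, ?_, by omega⟩
      rw [redSign_symm φ hsym v u]
      exact hs
  have hcard : D.card ≤ (Finset.range (n - 1)).card := by
    apply Finset.card_le_card_of_injOn F
    · intro p hp
      obtain ⟨a, b, hab, _, _, hFp⟩ := orient p hp
      rw [Finset.mem_coe, Finset.mem_range, hFp]
      have := b.isLt
      omega
    · intro p hp q hq hFeq
      obtain ⟨a1, b1, hab1, hij1, hs1, hF1⟩ := orient p hp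
      obtain ⟨a2, b2, hab2, hij2, hs2, hF2⟩ := orient q hq
      have ha : a1 = a2 := Fin.ext (by omega)
      have hb : b1 = b2 := Fin.ext (by omega)
      subst ha hb
      apply hg hp hq
      rcases hgp : g p with ⟨i1, j1, s1⟩
      rcases hgq : g q with ⟨i2, j2, s2⟩
      rw [hgp] at hij1 hs1
      rw [hgq] at hij2 hs2
      have hle1 := (hreq p hp).1
      have hle2 := (hreq q hq).1
      rw [hgp] at hle1
      rw [hgq] at hle2
      simp only at hij1 hij2 hs1 hs2 hle1 hle2
      have hij : i1 = i2 ∧ j1 = j2 := by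
        rcases hij1 with ⟨e1, e2⟩ | ⟨e1, e2⟩ <;> rcases hij2 with ⟨e3, e4⟩ | ⟨e3, e4⟩ <;> omega
      have hs : s1 = s2 := by rw [← hs1, ← hs2]
      simp [hij.1, hij.2, hs]
  simpa using hcard

lemma upper_even {n x : ℕ} {σ : Fin n → Fin n → ℤ}
    (h : AdmitsComplete (SimpleGraph.pathGraph n) σ (2 * x)) : x ^ 2 ≤ n - 1 := by
  obtain ⟨σ', hsig, _, φ, hcomp⟩ := h
  classical
  set g : ℕ × ℕ → ℕ × ℕ × ℤ := fun p =>
    if p.1 < p.2 then (p.1 + 1, p.2 + 1, 1)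
    else if p.2 < p.1 then (p.2 + 1, p.1 + 1, -1)
    else (p.1 + 1, p.1 + 1, -1) with hg
  have key := count_main hsig.1 hcomp (Finset.range x ×ˢ Finset.range x) g ?_ ?_
  · calc x ^ 2 = (Finset.range x ×ˢ Finset.range x).card := by
          simp [Finset.card_product]; ring
      _ ≤ n - 1 := key
  · intro p hp q hq heq
    rcases p with ⟨a, b⟩
    rcases q with ⟨a', b'⟩
    simp only [hg] at heq
    split_ifs at heq <;> simp only [Prod.mk.injEq] at heq <;>
      · simp only [Prod.mk.injEq]; omega
  · intro p hp
    rcases p with ⟨a, b⟩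
    simp only [Finset.mem_product, Finset.mem_range] at hp
    simp only [hg]
    split_ifs with h1 h2
    · refine ⟨by show a + 1 ≤ b + 1; omega,
        (mem_colourSet_even x (a + 1)).mpr ⟨by omega, by omega⟩,
        (mem_colourSet_even x (b + 1)).mpr ⟨by omega, by omega⟩,
        fun he => ?_, fun _ => Or.inl rfl⟩
      simp only [Prod.fst, Prod.snd] at he
      omega
    · refine ⟨by show b + 1 ≤ a + 1; omega,
        (mem_colourSet_even x (b + 1)).mpr ⟨by omega, by omega⟩,
        (mem_colourSet_even x (a + 1)).mpr ⟨by omega, by omega⟩,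
        fun he => ?_, fun _ => Or.inr rfl⟩
      exact ⟨by show 1 ≤ b + 1; omega, rfl⟩
    · refine ⟨le_refl _,
        (mem_colourSet_even x (a + 1)).mpr ⟨by omega, by omega⟩,
        (mem_colourSet_even x (a + 1)).mpr ⟨by omega, by omega⟩,
        fun _ => ⟨by show 1 ≤ a + 1; omega, rfl⟩,
        fun hne => absurd rfl hne⟩

lemma upper_odd {n x : ℕ} {σ : Fin n → Fin n → ℤ}
    (h : AdmitsComplete (SimpleGraph.pathGraph n) σ (2 * x + 1)) : x ^ 2 + 2 * x ≤ n - 1 := by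
  obtain ⟨σ', hsig, _, φ, hcomp⟩ := h
  classical
  set g : ℕ × ℕ → ℕ × ℕ × ℤ := fun p =>
    if p.1 < p.2 then (p.1, p.2, 1)
    else if p.2 < p.1 then (p.2, p.1, -1)
    else (p.1, p.1, -1) with hg
  set D := (Finset.range (x + 1) ×ˢ Finset.range (x + 1)).erase (0, 0) with hD
  have key := count_main hsig.1 hcomp D g ?_ ?_
  · calc x ^ 2 + 2 * x = D.card := by
          rw [hD, Finset.card_erase_of_mem (by simp), Finset.card_product, Finset.card_range]
          have : (x + 1) * (x + 1) = x ^ 2 + 2 * x + 1 := by ring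
          omega
      _ ≤ n - 1 := key
  · intro p hp q hq heq
    rcases p with ⟨a, b⟩
    rcases q with ⟨a', b'⟩
    simp only [hg] at heq
    split_ifs at heq <;> simp only [Prod.mk.injEq] at heq <;>
      · simp only [Prod.mk.injEq]; omega
  · intro p hp
    rcases p with ⟨a, b⟩
    rw [hD] at hp
    have hne : (a, b) ≠ ((0 : ℕ), (0 : ℕ)) := Finset.ne_of_mem_erase hp
    have hp' := Finset.mem_of_mem_erase hp
    simp only [Finset.mem_product, Finset.mem_range] at hp'
    have hne' : ¬(a = 0 ∧ b = 0) := by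
      intro ⟨h1, h2⟩; exact hne (by rw [h1, h2])
    simp only [hg]
    split_ifs with h1 h2
    · refine ⟨by show a ≤ b; omega,
        (mem_colourSet_odd x a).mpr (by omega),
        (mem_colourSet_odd x b).mpr (by omega),
        fun he => ?_, fun _ => Or.inl rfl⟩
      simp only [Prod.fst, Prod.snd] at he
      omega
    · refine ⟨by show b ≤ a; omega,
        (mem_colourSet_odd x b).mpr (by omega),
        (mem_colourSet_odd x a).mpr (by omega),
        fun he => absurd (show b = a from he) (by omega), fun _ => Or.inr rfl⟩
    · refine ⟨le_refl _,
        (mem_colourSet_odd x a).mpr (by omega),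
        (mem_colourSet_odd x a).mpr (by omega),
        fun _ => ⟨by show 1 ≤ a; omega, rfl⟩,
        fun hne2 => absurd rfl hne2⟩

lemma admits_one (n : ℕ) (hn : n = 1) (σ : Fin n → Fin n → ℤ) (hσ : IsSignature σ) :
    AdmitsComplete (SimpleGraph.pathGraph n) σ 1 := by
  have hnoadj : ∀ u v : Fin n, ¬ (SimpleGraph.pathGraph n).Adj u v := by
    intro u v hadj
    have h1 := u.isLt
    have h2 := v.isLt
    rcases SimpleGraph.pathGraph_adj.mp hadj with h | h <;> omega
  have h0 : (0 : ℤ) ∈ colourSet 1 := by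
    have : ¬ Even 1 := by decide
    simp [colourSet, this]
  refine ⟨σ, ?_, ⟨fun _ => 1, fun _ => Or.inl rfl, fun u v => by ring⟩, fun _ => 0, ?_, ?_, ?_⟩
  · exact hσ
  · exact ⟨fun _ => h0, fun u v hadj => absurd hadj (hnoadj u v)⟩
  · intro i j hi hj hij
    have hi' := (mem_colourSet_odd 0 i).mp (by exact_mod_cast hi)
    have hj' := (mem_colourSet_odd 0 j).mp (by exact_mod_cast hj)
    omega
  · intro i hi hik
    have hi' := (mem_colourSet_odd 0 i).mp (by exact_mod_cast hik)
    omega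


/-- For every `n ≥ 1` and every signature `σ` of the path `P_n`,
`ψ(P_n, σ) = max({2x : x² ≤ n−1} ∪ {2x+1 : (x+1)² − 1 ≤ n−1})`. -/
theorem statement5 (n : ℕ) (hn : 1 ≤ n) (σ : Fin n → Fin n → ℤ) (hσ : IsSignature σ) :
    psi (SimpleGraph.pathGraph n) σ =
      sSup ({k | ∃ x : ℕ, k = 2 * x ∧ x ^ 2 ≤ n - 1} ∪
            {k | ∃ x : ℕ, k = 2 * x + 1 ∧ (x + 1) ^ 2 - 1 ≤ n - 1}) := by
  set B : Set ℕ := ({k | ∃ x : ℕ, k = 2 * x ∧ x ^ 2 ≤ n - 1} ∪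
      {k | ∃ x : ℕ, k = 2 * x + 1 ∧ (x + 1) ^ 2 - 1 ≤ n - 1}) with hB
  set A : Set ℕ := {k | AdmitsComplete (SimpleGraph.pathGraph n) σ k} with hA
  have hBne : (1 : ℕ) ∈ B := Or.inr ⟨0, rfl, by norm_num⟩
  have hBbdd : BddAbove B := by
    refine ⟨2 * n + 1, fun k hk => ?_⟩
    rcases hk with ⟨x, rfl, hx⟩ | ⟨x, rfl, hx⟩
    · have h1 : x ≤ x ^ 2 := Nat.le_self_pow two_ne_zero x
      omega
    · have h1 : x + 1 ≤ (x + 1) ^ 2 := Nat.le_self_pow two_ne_zero (x + 1)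
      have h2 : 1 ≤ (x + 1) ^ 2 := Nat.one_le_pow _ _ (by omega)
      omega
  have hAsubB : A ⊆ B := by
    intro k hk
    rcases Nat.even_or_odd k with ⟨x, hx⟩ | ⟨x, hx⟩
    · have hx' : k = 2 * x := by omega
      subst hx'
      exact Or.inl ⟨x, rfl, upper_even hk⟩
    · have hx' : k = 2 * x + 1 := by omega
      subst hx'
      have h1 := upper_odd hk
      refine Or.inr ⟨x, rfl, ?_⟩
      have h2 : (x + 1) ^ 2 = x ^ 2 + 2 * x + 1 := by ring
      omega
  have hBA : sSup B ∈ A := by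
    have hmem : sSup B ∈ B := Nat.sSup_mem ⟨1, hBne⟩ hBbdd
    rcases Nat.lt_or_ge n 2 with h | h
    · have hn1 : n = 1 := by omega
      have hsup1 : sSup B = 1 := by
        apply le_antisymm
        · apply csSup_le ⟨1, hBne⟩
          intro k hk
          rcases hk with ⟨x, rfl, hx⟩ | ⟨x, rfl, hx⟩
          · have h1 : x ≤ x ^ 2 := Nat.le_self_pow two_ne_zero x
            omega
          · have h1 : x + 1 ≤ (x + 1) ^ 2 := Nat.le_self_pow two_ne_zero (x + 1)
            omega
        · exact le_csSup hBbdd hBne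
      rw [hsup1]
      exact admits_one n hn1 σ hσ
    · have h2B : (2 : ℕ) ∈ B := Or.inl ⟨1, by ring, by omega⟩
      have hs2 : 2 ≤ sSup B := le_csSup hBbdd h2B
      rcases hmem with ⟨x, hxe, hxle⟩ | ⟨x, hxe, hxle⟩
      · rw [hxe]
        exact construct_even n x h (by omega) hxle σ hσ
      · rw [hxe]
        have h2 : (x + 1) ^ 2 = x ^ 2 + 2 * x + 1 := by ring
        exact construct_odd n x h (by omega) (by omega) σ hσ
  have hAbdd : BddAbove A := hBbdd.mono hAsubB
  show sSup A = sSup B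
  exact le_antisymm (csSup_le_csSup hBbdd ⟨sSup B, hBA⟩ hAsubB) (le_csSup hAbdd hBA)
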